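/- arXiv:2503.21733 — 2 statements merged into one kernel-verified Lean document; each statement's English description precedes it below -/
import Mathlib

section
/- Let G be a connected simple graph, let F be a spanning tree of G, and let v ≠ w be vertices. Then no vertex c ∉ {v, w} separates v from w in G (i.e., for every c ∉ {v, w}, v and w are connected in the graph obtained from G by deleting c) if and only if for every internal vertex y of the F-path from v to w, the two neighbors x and z of y on that path are biconnected in G. -/
/-- Two vertices `a` and `b` of a simple graph `H` are *biconnected* in `H` if `a ≠ b` and
there exist two distinct paths from `a` to `b` in `H` whose only common vertices are
`a` and `b`. -/
def Biconnected {V : Type*} (H : SimpleGraph V) (a b : V) : Prop :=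
  a ≠ b ∧ ∃ p q : H.Path a b, p ≠ q ∧
    ∀ x, x ∈ p.1.support → x ∈ q.1.support → (x = a ∨ x = b)

/-- The graph obtained from `H` by deleting the vertex `c` and all edges incident to it
(keeping the same vertex type). -/
def removeVertex {V : Type*} (H : SimpleGraph V) (c : V) : SimpleGraph V where
  Adj a b := H.Adj a b ∧ a ≠ c ∧ b ≠ c
  symm := by
    constructor
    intro a b h
    exact ⟨h.1.symm, h.2.2, h.2.1⟩
  loopless := by
    constructor
    intro a h
    exact H.irrefl h.1

open SimpleGraph

/-- A walk in a subgraph `H ≤ G` avoiding `c` gives reachability in `removeVertex G c`. -/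
private lemma walk_reachable_rm {V : Type*} {H G : SimpleGraph V} (hHG : H ≤ G)
    {a b c : V} (t : H.Walk a b) (hc : c ∉ t.support) :
    (removeVertex G c).Reachable a b := by
  induction t with
  | nil => exact Reachable.refl _
  | @cons u u' b h p ih =>
    rw [Walk.support_cons, List.mem_cons] at hc
    push_neg at hc
    have h1 : (removeVertex G c).Adj u u' :=
      ⟨hHG h, fun hac => hc.1 hac.symm, fun hbc => hc.2 (hbc ▸ p.start_mem_support)⟩
    exact h1.reachable.trans (ih hc.2)

private lemma notMem_support_rm {V : Type*} {G : SimpleGraph V} {a b c : V}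
    (t : (removeVertex G c).Walk a b) (ha : a ≠ c) : c ∉ t.support := by
  induction t with
  | nil => simpa using Ne.symm ha
  | @cons u u' b h p ih =>
    rw [Walk.support_cons, List.mem_cons]
    push_neg
    exact ⟨Ne.symm ha, ih h.2.2⟩

/-- In a path starting at `y`, there is at most one edge at `y`. -/
private lemma eq_of_head_edges {V : Type*} {F : SimpleGraph V} {y t x z : V} {p : F.Walk y t}
    (hp : p.IsPath) (hx : s(y, x) ∈ p.edges) (hz : s(y, z) ∈ p.edges) : x = z := by
  cases p with
  | nil => simp at hx
  | @cons _ u _ h r =>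
    rw [Walk.cons_isPath_iff] at hp
    rw [Walk.edges_cons, List.mem_cons] at hx hz
    have hx' : x = u := by
      rcases hx with hx | hx
      · exact Sym2.congr_right.mp hx
      · exact absurd (r.fst_mem_support_of_mem_edges hx) hp.2
    have hz' : z = u := by
      rcases hz with hz | hz
      · exact Sym2.congr_right.mp hz
      · exact absurd (r.fst_mem_support_of_mem_edges hz) hp.2
    rw [hx', hz']

/-- In a path starting at `y`, an edge `s(y,x)` yields a walk from `x` to the end avoiding `y`. -/
private lemma exists_walk_avoid {V : Type*} {F : SimpleGraph V} {y t x : V} {p : F.Walk y t}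
    (hp : p.IsPath) (hx : s(y, x) ∈ p.edges) : ∃ r : F.Walk x t, y ∉ r.support := by
  cases p with
  | nil => simp at hx
  | @cons _ u _ h r =>
    rw [Walk.cons_isPath_iff] at hp
    rw [Walk.edges_cons, List.mem_cons] at hx
    rcases hx with hx | hx
    · obtain rfl : x = u := Sym2.congr_right.mp hx
      exact ⟨r, hp.2⟩
    · exact absurd (r.fst_mem_support_of_mem_edges hx) hp.2

/-- Let `G` be a connected simple graph, let `F` be a spanning tree of `G`, and let
`v ≠ w` be vertices. Then no vertex `c ∉ {v, w}` separates `v` from `w` in `G` if and only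
if for every internal vertex `y` of the `F`-path from `v` to `w`, the two neighbors `x`
and `z` of `y` on that path are biconnected in `G`. -/
theorem no_separator_iff_path_neighbors_biconnected {V : Type*}
    (G F : SimpleGraph V) (hG : G.Connected)
    (hFG : F ≤ G) (hacyc : F.IsAcyclic) (hFconn : F.Connected)
    (v w : V) (hvw : v ≠ w) :
    (∀ c : V, c ≠ v → c ≠ w → (removeVertex G c).Reachable v w) ↔
      (∀ (P : F.Path v w) (x y z : V), y ∈ P.1.support → y ≠ v → y ≠ w →
        s(y, x) ∈ P.1.edges → s(y, z) ∈ P.1.edges → x ≠ z → Biconnected G x z) := by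
  classical
  have hrm_le : ∀ c : V, removeVertex G c ≤ G := fun c a b h => h.1
  constructor
  · intro h P x y z hy hyv hyw hex hez hxz
    have hyx : F.Adj y x := P.1.adj_of_mem_edges hex
    have hyz : F.Adj y z := P.1.adj_of_mem_edges hez
    have hq1 : (P.1.takeUntil y hy).reverse.IsPath := (P.2.takeUntil hy).reverse
    have hq2 : (P.1.dropUntil y hy).IsPath := P.2.dropUntil hy
    have hsplit : ∀ u : V, s(y, u) ∈ P.1.edges →
        s(y, u) ∈ (P.1.takeUntil y hy).reverse.edges ∨
        s(y, u) ∈ (P.1.dropUntil y hy).edges := by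
      intro u hu
      rw [← Walk.take_spec P.1 hy, Walk.edges_append, List.mem_append] at hu
      rw [Walk.edges_reverse, List.mem_reverse]
      exact hu
    -- reachability from x to z in removeVertex G y
    have reach : (removeVertex G y).Reachable x z := by
      rcases hsplit x hex with hx1 | hx2
      · rcases hsplit z hez with hz1 | hz2
        · exact absurd (eq_of_head_edges hq1 hx1 hz1) hxz
        · obtain ⟨rx, hrx⟩ := exists_walk_avoid hq1 hx1
          obtain ⟨rz, hrz⟩ := exists_walk_avoid hq2 hz2
          exact ((walk_reachable_rm hFG rx hrx).trans (h y hyv hyw)).trans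
            (walk_reachable_rm hFG rz hrz).symm
      · rcases hsplit z hez with hz1 | hz2
        · obtain ⟨rx, hrx⟩ := exists_walk_avoid hq2 hx2
          obtain ⟨rz, hrz⟩ := exists_walk_avoid hq1 hz1
          exact ((walk_reachable_rm hFG rx hrx).trans (h y hyv hyw).symm).trans
            (walk_reachable_rm hFG rz hrz).symm
        · exact absurd (eq_of_head_edges hq2 hx2 hz2) hxz
    obtain ⟨t'⟩ := reach
    have hyt' : y ∉ t'.support := notMem_support_rm t' hyx.ne'
    have ht_edges : ∀ e ∈ t'.edges, e ∈ G.edgeSet := fun e he =>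
      SimpleGraph.edgeSet_mono (hrm_le y) (t'.edges_subset_edgeSet he)
    set t : G.Walk x z := t'.transfer G ht_edges with ht_def
    have hyt : y ∉ t.support := by rwa [Walk.support_transfer]
    set p0 : G.Path x z := t.toPath with hp0_def
    have hyp0 : y ∉ p0.1.support := fun hm => hyt (t.support_toPath_subset hm)
    have hxy : G.Adj x y := (hFG hyx).symm
    have hyzG : G.Adj y z := hFG hyz
    refine ⟨hxz, p0, ⟨Walk.cons hxy (Walk.cons hyzG Walk.nil), ?_⟩, ?_, ?_⟩
    · rw [Walk.isPath_def]
      simp [hxy.ne, hxz, hyzG.ne]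
    · intro hpq
      apply hyp0
      have := congrArg (fun r : G.Path x z => r.1.support) hpq
      simp only at this
      rw [this]
      simp
    · intro u hup huq
      simp [Walk.support_cons] at huq
      rcases huq with rfl | rfl | rfl
      · exact Or.inl rfl
      · exact absurd hup hyp0
      · exact Or.inr rfl
  · intro h c hcv hcw
    obtain ⟨pw⟩ := hFconn.preconnected v w
    set P : F.Path v w := pw.toPath with hP_def
    by_cases hc : c ∈ P.1.support
    · have hq1 : (P.1.takeUntil c hc).reverse.IsPath := (P.2.takeUntil hc).reverse
      have hq2 : (P.1.dropUntil c hc).IsPath := P.2.dropUntil hc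
      obtain ⟨x, hcx, r, hr⟩ := Walk.exists_eq_cons_of_ne hcv (P.1.takeUntil c hc).reverse
      obtain ⟨z, hcz, s, hs⟩ := Walk.exists_eq_cons_of_ne hcw (P.1.dropUntil c hc)
      have hcr : c ∉ r.support := by
        have := hq1
        rw [hr, Walk.cons_isPath_iff] at this
        exact this.2
      have hcs : c ∉ s.support := by
        have := hq2
        rw [hs, Walk.cons_isPath_iff] at this
        exact this.2
      have hex : s(c, x) ∈ P.1.edges := by
        rw [← Walk.take_spec P.1 hc, Walk.edges_append, List.mem_append]
        left
        rw [← List.mem_reverse, ← Walk.edges_reverse, hr, Walk.edges_cons]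
        exact List.mem_cons_self
      have hez : s(c, z) ∈ P.1.edges := by
        rw [← Walk.take_spec P.1 hc, Walk.edges_append, List.mem_append]
        right
        rw [hs, Walk.edges_cons]
        exact List.mem_cons_self
      have hxz : x ≠ z := by
        have hnd : (P.1.support).Nodup := P.2.support_nodup
        rw [← Walk.take_spec P.1 hc, Walk.support_append] at hnd
        have hdisj := List.disjoint_of_nodup_append hnd
        have hx1 : x ∈ (P.1.takeUntil c hc).support := by
          rw [← List.mem_reverse, ← Walk.support_reverse, hr, Walk.support_cons]
          exact List.mem_cons_of_mem _ r.start_mem_support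
        have hz2 : z ∈ (P.1.dropUntil c hc).support.tail := by
          rw [hs, Walk.support_cons, List.tail_cons]
          exact s.start_mem_support
        exact fun hEq => hdisj hx1 (hEq ▸ hz2)
      obtain ⟨_, p, q, hpq, hdisj⟩ := h P x c z hc hcv hcw hex hez hxz
      have hone : c ∉ p.1.support ∨ c ∉ q.1.support := by
        by_contra hcon
        push_neg at hcon
        rcases hdisj c hcon.1 hcon.2 with rfl | rfl
        · exact hcx.ne rfl
        · exact hcz.ne rfl
      have reach_xz : (removeVertex G c).Reachable x z := by
        rcases hone with h1 | h1
        · exact walk_reachable_rm le_rfl p.1 h1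
        · exact walk_reachable_rm le_rfl q.1 h1
      exact ((walk_reachable_rm hFG r hcr).symm.trans reach_xz).trans
        (walk_reachable_rm hFG s hcs)
    · exact walk_reachable_rm hFG P.1 hc
end

section
/- Let G be a simple graph and let v ≠ w be vertices that are connected in G. Then v and w are adjacent or biconnected in G if and only if there is no vertex c ∉ {v, w} such that v and w are disconnected in the graph obtained from G by deleting c. In particular, two connected vertices are pseudo-biconnected (biconnected or joined by a bridge) if and only if no cutvertex separates them. -/
section Helpers

variable {V : Type*} {G : SimpleGraph V} {c a b : V}

/-- From a walk avoiding `c`, reachability in `removeVertex G c`. -/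
lemma toRemove : ∀ {a b : V} (p : G.Walk a b), c ∉ p.support → (removeVertex G c).Reachable a b := by
  intro a b p
  induction p with
  | nil => intro _; rfl
  | cons h q ih =>
      intro hc
      rw [SimpleGraph.Walk.support_cons, List.mem_cons] at hc
      push_neg at hc
      have hb' : c ∉ q.support := hc.2
      have h1 : (removeVertex G c).Adj _ _ :=
        ⟨h, fun he => hc.1 he.symm, fun he => hc.2 (he ▸ q.start_mem_support)⟩
      exact h1.reachable.trans (ih hb')

/-- From reachability in `removeVertex G c`, a walk in `G` avoiding `c`. -/
lemma ofRemove : ∀ {a b : V} (p : (removeVertex G c).Walk a b), a ≠ c →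
    ∃ q : G.Walk a b, c ∉ q.support := by
  intro a b p
  induction p with
  | nil => intro ha; exact ⟨SimpleGraph.Walk.nil, by simp [ha.symm]⟩
  | @cons u x b h q ih =>
      intro _
      obtain ⟨q', hq'⟩ := ih h.2.2
      exact ⟨SimpleGraph.Walk.cons h.1 q', by
        rw [SimpleGraph.Walk.support_cons, List.mem_cons]
        push_neg
        exact ⟨fun he => h.2.1 he.symm, hq'⟩⟩

lemma removeReach_iff (hv : a ≠ c) :
    (removeVertex G c).Reachable a b ↔ ∃ p : G.Walk a b, c ∉ p.support := by
  constructor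
  · rintro ⟨p⟩; exact ofRemove p hv
  · rintro ⟨p, hp⟩; exact toRemove p hp

/-- first hit of a set along a walk -/
lemma firstHit (S : Set V) : ∀ {a b : V} (p : G.Walk a b), b ∈ S →
    ∃ z, z ∈ S ∧ ∃ q : G.Walk a z, q.support ⊆ p.support ∧ (∀ x ∈ q.support, x ∈ S → x = z) := by
  intro a b p
  induction p with
  | nil => intro hb; exact ⟨_, hb, SimpleGraph.Walk.nil, by simp, by simp⟩
  | @cons u x b h q ih =>
      intro hb
      by_cases haS : u ∈ S
      · refine ⟨u, haS, SimpleGraph.Walk.nil, by simp, by simp⟩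
      · obtain ⟨z, hzS, q', hsub, hfst⟩ := ih hb
        refine ⟨z, hzS, SimpleGraph.Walk.cons h q', ?_, ?_⟩
        · rw [SimpleGraph.Walk.support_cons, SimpleGraph.Walk.support_cons]
          exact List.cons_subset_cons _ hsub
        · intro x hx hxS
          rw [SimpleGraph.Walk.support_cons, List.mem_cons] at hx
          rcases hx with rfl | hx
          · exact absurd hxS haS
          · exact hfst x hx hxS

open SimpleGraph Walk

lemma penult : ∀ {v w : V} (P : G.Walk v w), P.length ≠ 0 →
    ∃ u, G.Adj u w ∧ ∃ q : G.Walk v u, q.length + 1 = P.length := by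
  intro v w P
  induction P with
  | nil => intro h; simp at h
  | @cons a x b h p ih =>
      intro _
      by_cases hp : p.length = 0
      · have hxb : x = b := SimpleGraph.Walk.eq_of_length_eq_zero hp
        subst hxb
        exact ⟨a, h, SimpleGraph.Walk.nil, by simp [hp]⟩
      · obtain ⟨u, hadj, q, hq⟩ := ih hp
        exact ⟨u, hadj, SimpleGraph.Walk.cons h q, by
          rw [SimpleGraph.Walk.length_cons, SimpleGraph.Walk.length_cons, ← hq]⟩

lemma notEnd [DecidableEq V] {v u z : V} (P : G.Walk v u) (hp : P.IsPath)
    (hz : z ∈ P.support) (hzu : z ≠ u) : u ∉ (P.takeUntil z hz).support := by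
  intro hu
  have hspec := P.take_spec hz
  have hnd : P.support.Nodup := hp.support_nodup
  rw [← hspec, SimpleGraph.Walk.support_append] at hnd
  have hdisj := List.disjoint_of_nodup_append hnd
  have hu2 : u ∈ (P.dropUntil z hz).support.tail := by
    have h1 : u ∈ (P.dropUntil z hz).support := SimpleGraph.Walk.end_mem_support _
    rw [SimpleGraph.Walk.support_eq_cons] at h1
    rcases List.mem_cons.mp h1 with h1 | h1
    · exact absurd h1.symm hzu
    · exact h1
  exact hdisj hu hu2

lemma surgery [DecidableEq V] {v u w z : V}
    (P1 P2 : G.Walk v u) (h1 : P1.IsPath)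
    (hdisj : ∀ x, x ∈ P1.support → x ∈ P2.support → x = v ∨ x = u)
    (huw : G.Adj u w)
    (hz1 : z ∈ P1.support) (hzu : z ≠ u)
    (tail : G.Walk z w) (hu_tail : u ∉ tail.support)
    (htail : ∀ x ∈ tail.support, (x ∈ P1.support ∨ x ∈ P2.support) → x = z) :
    ∃ A B : G.Walk v w, ∀ x, x ∈ A.support → x ∈ B.support → x = v ∨ x = w := by
  refine ⟨P2.concat huw, (P1.takeUntil z hz1).append tail, ?_⟩
  intro x hxA hxB
  rw [SimpleGraph.Walk.support_concat, List.mem_append, List.mem_singleton] at hxA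
  rcases hxA with hxA | rfl
  · rw [SimpleGraph.Walk.mem_support_append_iff] at hxB
    rcases hxB with hxB | hxB
    · have := hdisj x (SimpleGraph.Walk.support_takeUntil_subset _ _ hxB) hxA
      rcases this with rfl | rfl
      · exact Or.inl rfl
      · exact absurd hxB (notEnd P1 h1 hz1 hzu)
    · have hxz : x = z := htail x hxB (Or.inr hxA)
      subst hxz
      rcases hdisj x hz1 hxA with rfl | rfl
      · exact Or.inl rfl
      · exact absurd rfl hzu
  · exact Or.inr rfl

lemma key (G : SimpleGraph V) (v : V) : ∀ n (w : V), G.dist v w = n → v ≠ w → G.Reachable v w →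
    (∀ c : V, c ≠ v → c ≠ w → ∃ p : G.Walk v w, c ∉ p.support) →
    G.Adj v w ∨ ∃ p q : G.Walk v w, p.IsPath ∧ q.IsPath ∧
      ∀ x, x ∈ p.support → x ∈ q.support → x = v ∨ x = w := by
  classical
  intro n
  induction n using Nat.strong_induction_on with
  | _ n ih =>
  intro w hd hne hr H
  have hpos : 0 < n := hd ▸ hr.pos_dist_of_ne hne
  obtain ⟨P, hP⟩ := hr.exists_walk_length_eq_dist
  rw [hd] at hP
  -- get the penultimate vertex u
  obtain ⟨u, huw, q, hq⟩ := penult P (by omega)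
  rw [hP] at hq
  have hqlen : q.length = n - 1 := by omega
  have hru : G.Reachable v u := ⟨q⟩
  have hdvu : G.dist v u = n - 1 := by
    have h1 : G.dist v u ≤ n - 1 := hqlen ▸ SimpleGraph.dist_le q
    have h2 : n ≤ G.dist v u + 1 := by
      obtain ⟨s, hs⟩ := hru.exists_walk_length_eq_dist
      calc n = G.dist v w := hd.symm
        _ ≤ (s.concat huw).length := SimpleGraph.dist_le _
        _ = G.dist v u + 1 := by rw [SimpleGraph.Walk.length_concat, hs]
    omega
  have hu_ne_w : u ≠ w := huw.ne
  rcases Nat.lt_or_ge n 2 with hn2 | hn2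
  · -- n = 1 : adjacent
    left
    have : P.length = 1 := by omega
    exact SimpleGraph.Walk.adj_of_length_eq_one this
  have hvu : v ≠ u := by
    intro h
    rw [← h, SimpleGraph.dist_self] at hdvu
    omega
  rcases Nat.lt_or_ge n 3 with hn3 | hn3
  · -- n = 2
    right
    have hvu_adj : G.Adj v u := by
      have : q.length = 1 := by omega
      exact SimpleGraph.Walk.adj_of_length_eq_one this
    obtain ⟨R, hR⟩ := H u hvu.symm hu_ne_w
    refine ⟨(SimpleGraph.Walk.cons hvu_adj huw.toWalk).bypass, R.bypass,
      SimpleGraph.Walk.bypass_isPath _, SimpleGraph.Walk.bypass_isPath _, ?_⟩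
    intro x hx hxR
    have hx' := SimpleGraph.Walk.support_bypass_subset _ hx
    have hxR' := SimpleGraph.Walk.support_bypass_subset _ hxR
    simp only [SimpleGraph.Walk.support_cons, SimpleGraph.Adj.toWalk,
      SimpleGraph.Walk.support_cons, SimpleGraph.Walk.support_nil, List.mem_cons,
      List.mem_singleton] at hx'
    rcases hx' with rfl | rfl | rfl | h
    · exact Or.inl rfl
    · exact absurd hxR' hR
    · exact Or.inr rfl
    · simp at h
  -- n ≥ 3
  · have Hu : ∀ c : V, c ≠ v → c ≠ u → ∃ p : G.Walk v u, c ∉ p.support := by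
      intro c hcv hcu
      by_cases hcw : c = w
      · subst hcw
        obtain ⟨s, hs⟩ := hru.exists_walk_length_eq_dist
        refine ⟨s, fun hw => ?_⟩
        have h1 : G.dist v c ≤ (s.takeUntil c hw).length := SimpleGraph.dist_le _
        have h2 : (s.takeUntil c hw).length ≤ s.length :=
          SimpleGraph.Walk.length_takeUntil_le _ _
        rw [hs, hdvu] at h2
        rw [hd] at h1
        omega
      · obtain ⟨R, hR⟩ := H c hcv hcw
        by_cases hu : u ∈ R.support
        · exact ⟨R.takeUntil u hu, fun hc =>
            hR (SimpleGraph.Walk.support_takeUntil_subset _ _ hc)⟩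
        · refine ⟨R.concat huw.symm, ?_⟩
          rw [SimpleGraph.Walk.support_concat, List.mem_append,
            List.mem_singleton]
          rintro (hc | rfl)
          · exact hR hc
          · exact hcu rfl
    have hIH := ih (n - 1) (by omega) u hdvu hvu hru Hu
    rcases hIH with hadj | ⟨P1, P2, hp1, hp2, hdisj⟩
    · -- Adj v u gives dist v w ≤ 2 contradiction
      exfalso
      have : G.dist v w ≤ 2 := by
        calc G.dist v w ≤ (SimpleGraph.Walk.cons hadj huw.toWalk).length := SimpleGraph.dist_le _
          _ = 2 := by simp
      omega
    · obtain ⟨R, hR⟩ := H u hvu.symm hu_ne_w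
      obtain ⟨z, hzS, qq, hsub, hfst⟩ := firstHit {x | x ∈ P1.support ∨ x ∈ P2.support}
        R.reverse (Or.inl (SimpleGraph.Walk.start_mem_support P1))
      rw [SimpleGraph.Walk.support_reverse] at hsub
      have hsub' : qq.support ⊆ R.support := fun x hx => List.mem_reverse.mp (hsub hx)
      have hzu : z ≠ u := fun h =>
        hR (hsub' (h ▸ SimpleGraph.Walk.end_mem_support qq))
      have hu_tail : u ∉ qq.reverse.support := by
        rw [SimpleGraph.Walk.support_reverse, List.mem_reverse]
        exact fun h => hR (hsub' h)
      have htail : ∀ x ∈ qq.reverse.support, (x ∈ P1.support ∨ x ∈ P2.support) → x = z := by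
        intro x hx hxS
        rw [SimpleGraph.Walk.support_reverse, List.mem_reverse] at hx
        exact hfst x hx hxS
      have key2 : ∃ A B : G.Walk v w, ∀ x, x ∈ A.support → x ∈ B.support → x = v ∨ x = w := by
        rcases hzS with hz1 | hz2
        · exact surgery P1 P2 hp1 hdisj huw hz1 hzu qq.reverse hu_tail htail
        · obtain ⟨A, B, hAB⟩ := surgery P2 P1 hp2
            (fun x h2 h1 => hdisj x h1 h2) huw hz2 hzu qq.reverse hu_tail
            (fun x hx hxS => htail x hx hxS.symm)
          exact ⟨A, B, hAB⟩
      obtain ⟨A, B, hAB⟩ := key2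
      right
      exact ⟨A.bypass, B.bypass, SimpleGraph.Walk.bypass_isPath _,
        SimpleGraph.Walk.bypass_isPath _, fun x hx hy =>
          hAB x (SimpleGraph.Walk.support_bypass_subset _ hx)
            (SimpleGraph.Walk.support_bypass_subset _ hy)⟩

lemma adj_of_small {v w : V} (p : G.Walk v w) (hp : p.IsPath) (hvw : v ≠ w)
    (hall : ∀ x ∈ p.support, x = v ∨ x = w) : G.Adj v w := by
  cases p with
  | nil => exact absurd rfl hvw
  | @cons a y b h p' =>
      have hy : y ∈ (SimpleGraph.Walk.cons h p').support := by
        rw [SimpleGraph.Walk.support_cons]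
        exact List.mem_cons_of_mem _ (SimpleGraph.Walk.start_mem_support p')
      rcases hall y hy with rfl | rfl
      · exact absurd (SimpleGraph.Walk.start_mem_support p')
          ((SimpleGraph.Walk.cons_isPath_iff _ _).mp hp).2
      · exact h


end Helpers

/-- Let `G` be a simple graph and let `v ≠ w` be vertices that are connected in `G`.
Then `v` and `w` are adjacent or biconnected in `G` if and only if there is no vertex
`c ∉ {v, w}` such that `v` and `w` are disconnected in the graph obtained from `G` by
deleting `c`. In particular, two connected vertices are pseudo-biconnected (biconnected
or joined by a bridge) if and only if no cutvertex separates them. -/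
theorem adj_or_biconnected_iff_no_separator {V : Type*} (G : SimpleGraph V)
    (v w : V) (hvw : v ≠ w) (hconn : G.Reachable v w) :
    ((G.Adj v w ∨ Biconnected G v w) ↔
      ¬ ∃ c : V, c ≠ v ∧ c ≠ w ∧ ¬ (removeVertex G c).Reachable v w) ∧
    ((Biconnected G v w ∨ (G.Adj v w ∧ G.IsBridge s(v, w))) ↔
      ¬ ∃ c : V, c ≠ v ∧ c ≠ w ∧ ¬ (removeVertex G c).Reachable v w) := by
  classical
  have part1 : (G.Adj v w ∨ Biconnected G v w) ↔
      ¬ ∃ c : V, c ≠ v ∧ c ≠ w ∧ ¬ (removeVertex G c).Reachable v w := by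
    constructor
    · rintro h ⟨c, hcv, hcw, hnr⟩
      apply hnr
      rcases h with hadj | ⟨-, p, q, hpq, hcommon⟩
      · exact SimpleGraph.Adj.reachable ⟨hadj, hcv.symm, hcw.symm⟩
      · by_cases hcp : c ∈ p.1.support
        · have hcq : c ∉ q.1.support := fun hcq => by
            rcases hcommon c hcp hcq with rfl | rfl
            · exact hcv rfl
            · exact hcw rfl
          exact toRemove q.1 hcq
        · exact toRemove p.1 hcp
    · intro hno
      push_neg at hno
      have H : ∀ c : V, c ≠ v → c ≠ w → ∃ p : G.Walk v w, c ∉ p.support := by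
        intro c hcv hcw
        obtain ⟨p⟩ := hno c hcv hcw
        exact ofRemove p hcv.symm
      rcases key G v (G.dist v w) w rfl hvw hconn H with hadj | ⟨p, q, hp, hq, hdisj⟩
      · exact Or.inl hadj
      · by_cases hpq : p = q
        · subst hpq
          exact Or.inl (adj_of_small p hp hvw (fun x hx => hdisj x hx hx))
        · exact Or.inr ⟨hvw, ⟨p, hp⟩, ⟨q, hq⟩, fun h => hpq (congrArg Subtype.val h), hdisj⟩
  have bic_of_not_bridge : G.Adj v w → ¬ G.IsBridge s(v, w) → Biconnected G v w := by
    intro hadj hbr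
    rw [SimpleGraph.isBridge_iff_adj_and_forall_walk_mem_edges] at hbr
    have : ∃ p : G.Walk v w, s(v, w) ∉ p.edges := by
      by_contra hc
      push_neg at hc
      exact hbr hc
    obtain ⟨p0, hp0⟩ := this
    have hp0' : s(v, w) ∉ p0.bypass.edges := fun h =>
      hp0 (SimpleGraph.Walk.edges_bypass_subset _ h)
    refine ⟨hvw, SimpleGraph.Path.singleton hadj, p0.toPath, ?_, ?_⟩
    · intro h
      apply hp0'
      have hmem : s(v, w) ∈ (SimpleGraph.Path.singleton hadj).1.edges := by
        simp [SimpleGraph.Path.singleton]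
      rw [h] at hmem
      exact hmem
    · intro x hx _
      have hx' : x = v ∨ x = w := by
        simpa [SimpleGraph.Path.singleton] using hx
      exact hx'
  refine ⟨part1, ?_⟩
  constructor
  · rintro (hbic | ⟨hadj, -⟩)
    · exact part1.mp (Or.inr hbic)
    · exact part1.mp (Or.inl hadj)
  · intro hno
    rcases part1.mpr hno with hadj | hbic
    · by_cases hbr : G.IsBridge s(v, w)
      · exact Or.inr ⟨hadj, hbr⟩
      · exact Or.inl (bic_of_not_bridge hadj hbr)
    · exact Or.inl hbic
end
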